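/- Let R be a weakly bleached local ring such that M₂(R) is strongly clean, and let σ be an endomorphism of R with σ(J(R)) ⊆ J(R). Then M₂(R[[x; σ]]) is strongly clean. -/

import Mathlib

/-- An element of a ring is strongly clean if it is the sum of an idempotent and a unit
that commute with each other. -/
def IsStronglyClean {S : Type*} [Ring S] (a : S) : Prop :=
  ∃ e u : S, IsIdempotentElem e ∧ IsUnit u ∧ a = e + u ∧ e * u = u * e

/-- A local ring `R` is weakly bleached if for all `j₁, j₂ ∈ J(R)` (the nonunits) the
additive maps `x ↦ (1+j₁)x - xj₂` and `x ↦ j₂x - x(1+j₁)` are surjective. -/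
def IsWeaklyBleached (R : Type*) [Ring R] : Prop :=
  ∀ j₁ j₂ : R, ¬ IsUnit j₁ → ¬ IsUnit j₂ →
    Function.Surjective (fun x : R => (1 + j₁) * x - x * j₂) ∧
    Function.Surjective (fun x : R => j₂ * x - x * (1 + j₁))


section LocalLemmas
variable {R : Type*} [Ring R] [IsLocalRing R]

lemma unitIdemEqOne {R₀ : Type*} [Ring R₀] {e : R₀} (h : e * e = e) (hu : IsUnit e) :
    e = 1 := by
  rcases hu with ⟨v, hv⟩
  subst hv
  calc (↑v : R₀) = ↑v⁻¹ * (↑v * ↑v) := by rw [← mul_assoc, Units.inv_mul, one_mul]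
    _ = ↑v⁻¹ * ↑v := by rw [h]
    _ = 1 := Units.inv_mul v

/-- In a (possibly noncommutative) local ring, a left-invertible element is a unit. -/
lemma IsLocalRingAux.isUnit_of_mul_eq_one_left {u j : R} (h : u * j = 1) : IsUnit j := by
  have hsum : j * u + (1 - j * u) = 1 := by abel
  rcases IsLocalRing.isUnit_or_isUnit_of_add_one hsum with hju | hju
  · have hidem : (j * u) * (j * u) = j * u := by
      calc (j * u) * (j * u) = j * (u * j) * u := by noncomm_ring
        _ = j * u := by rw [h]; noncomm_ring
    have h1 : j * u = 1 := unitIdemEqOne hidem hju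
    exact ⟨⟨j, u, h1, h⟩, rfl⟩
  · exfalso
    have h0 : (1 - j * u) * j = 0 := by
      have h2 : j * (u * j) = j * 1 := by rw [h]
      calc (1 - j * u) * j = j - j * (u * j) := by noncomm_ring
        _ = 0 := by rw [h2, mul_one, sub_self]
    rcases hju with ⟨v, hv⟩
    have hj : j = 0 := by
      have h3 : (↑v⁻¹ : R) * ((1 - j * u) * j) = 0 := by rw [h0, mul_zero]
      rwa [← hv, ← mul_assoc, Units.inv_mul, one_mul] at h3
    rw [hj, mul_zero] at h
    exact one_ne_zero h.symm

lemma IsLocalRingAux.isUnit_of_mul_eq_one_right {u j : R} (h : j * u = 1) : IsUnit j := by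
  have hsum : u * j + (1 - u * j) = 1 := by abel
  rcases IsLocalRing.isUnit_or_isUnit_of_add_one hsum with hju | hju
  · have hidem : (u * j) * (u * j) = u * j := by
      calc (u * j) * (u * j) = u * (j * u) * j := by noncomm_ring
        _ = u * j := by rw [h]; noncomm_ring
    have h1 : u * j = 1 := unitIdemEqOne hidem hju
    exact ⟨⟨j, u, h, h1⟩, rfl⟩
  · exfalso
    have h0 : j * (1 - u * j) = 0 := by
      have h2 : (j * u) * j = 1 * j := by rw [h]
      calc j * (1 - u * j) = j - (j * u) * j := by noncomm_ring
        _ = 0 := by rw [h2, one_mul, sub_self]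
    rcases hju with ⟨v, hv⟩
    have hj : j = 0 := by
      have h3 : (j * (1 - u * j)) * (↑v⁻¹ : R) = 0 := by rw [h0, zero_mul]
      rwa [← hv, mul_assoc, Units.mul_inv, mul_one] at h3
    rw [hj, zero_mul] at h
    exact one_ne_zero h.symm

lemma IsLocalRingAux.not_isUnit_mul_left {j : R} (hj : ¬ IsUnit j) (r : R) :
    ¬ IsUnit (r * j) := by
  intro h
  rcases h with ⟨v, hv⟩
  have h1 : ((↑v⁻¹ : R) * r) * j = 1 := by
    rw [mul_assoc, ← hv, Units.inv_mul]
  exact hj (IsLocalRingAux.isUnit_of_mul_eq_one_left h1)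

lemma IsLocalRingAux.not_isUnit_mul_right {j : R} (hj : ¬ IsUnit j) (r : R) :
    ¬ IsUnit (j * r) := by
  intro h
  rcases h with ⟨v, hv⟩
  have h1 : j * (r * (↑v⁻¹ : R)) = 1 := by
    rw [← mul_assoc, ← hv, Units.mul_inv]
  exact hj (IsLocalRingAux.isUnit_of_mul_eq_one_right h1)

lemma IsLocalRingAux.not_isUnit_add {a b : R} (ha : ¬ IsUnit a) (hb : ¬ IsUnit b) :
    ¬ IsUnit (a + b) := by
  intro h
  rcases h with ⟨v, hv⟩
  have hsum : (↑v⁻¹ : R) * a + (↑v⁻¹ : R) * b = 1 := by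
    rw [← mul_add, ← hv, Units.inv_mul]
  rcases IsLocalRing.isUnit_or_isUnit_of_add_one hsum with h' | h'
  · refine ha ?_
    have := v.isUnit.mul h'
    rwa [← mul_assoc, Units.mul_inv, one_mul] at this
  · refine hb ?_
    have := v.isUnit.mul h'
    rwa [← mul_assoc, Units.mul_inv, one_mul] at this

lemma IsLocalRingAux.isUnit_one_sub {p : R} (hp : ¬ IsUnit p) : IsUnit (1 - p) := by
  have hsum : (1 - p) + p = 1 := by abel
  rcases IsLocalRing.isUnit_or_isUnit_of_add_one hsum with h | h
  · exact h
  · exact absurd h hp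

end LocalLemmas


namespace M2Aux
variable {B : Type*} [Ring B]

open Matrix

def lowUnit (z : B) : (Matrix (Fin 2) (Fin 2) B)ˣ :=
  ⟨!![1, 0; z, 1], !![1, 0; -z, 1],
    by rw [Matrix.mul_fin_two]; simp [Matrix.one_fin_two],
    by rw [Matrix.mul_fin_two]; simp [Matrix.one_fin_two]⟩

def upUnit (y : B) : (Matrix (Fin 2) (Fin 2) B)ˣ :=
  ⟨!![1, y; 0, 1], !![1, -y; 0, 1],
    by rw [Matrix.mul_fin_two]; simp [Matrix.one_fin_two],
    by rw [Matrix.mul_fin_two]; simp [Matrix.one_fin_two]⟩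

def swapUnit : (Matrix (Fin 2) (Fin 2) B)ˣ :=
  ⟨!![0, 1; 1, 0], !![0, 1; 1, 0],
    by rw [Matrix.mul_fin_two]; simp [Matrix.one_fin_two],
    by rw [Matrix.mul_fin_two]; simp [Matrix.one_fin_two]⟩

@[simp] lemma swapUnit_coe : ((swapUnit : (Matrix (Fin 2) (Fin 2) B)ˣ)).val = !![(0:B), 1; 1, 0] := rfl

@[simp] lemma swapUnit_inv_coe : (((swapUnit : (Matrix (Fin 2) (Fin 2) B)ˣ))⁻¹).val = !![(0:B), 1; 1, 0] := rfl

def diagUnit (u w : Bˣ) : (Matrix (Fin 2) (Fin 2) B)ˣ :=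
  ⟨!![(u : B), 0; 0, (w : B)], !![((u⁻¹ : Bˣ) : B), 0; 0, ((w⁻¹ : Bˣ) : B)],
    by rw [Matrix.mul_fin_two]; simp [Matrix.one_fin_two],
    by rw [Matrix.mul_fin_two]; simp [Matrix.one_fin_two]⟩

@[simp] lemma lowUnit_coe (z : B) : (lowUnit z : (Matrix (Fin 2) (Fin 2) B)ˣ).val = !![1, 0; z, 1] := rfl

@[simp] lemma upUnit_coe (y : B) : (upUnit y : (Matrix (Fin 2) (Fin 2) B)ˣ).val = !![1, y; 0, 1] := rfl

@[simp] lemma lowUnit_inv_coe (z : B) : ((lowUnit z)⁻¹ : (Matrix (Fin 2) (Fin 2) B)ˣ).val = !![1, 0; -z, 1] := rfl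

@[simp] lemma upUnit_inv_coe (y : B) : ((upUnit y)⁻¹ : (Matrix (Fin 2) (Fin 2) B)ˣ).val = !![1, -y; 0, 1] := rfl

lemma isUnit_diag {u w : B} (hu : IsUnit u) (hw : IsUnit w) :
    IsUnit !![u, 0; 0, w] := by
  rcases hu with ⟨U, rfl⟩
  rcases hw with ⟨W, rfl⟩
  exact ⟨diagUnit U W, rfl⟩

lemma isUnit_diag_entries {u w : B} (h : IsUnit !![u, 0; 0, w]) :
    IsUnit u ∧ IsUnit w := by
  rcases h with ⟨V, hV⟩
  set M : Matrix (Fin 2) (Fin 2) B := (V⁻¹).val with hM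
  have h1 : !![u, 0; 0, w] * M = 1 := by rw [hM, ← hV]; exact Units.mul_inv V
  have h2 : M * !![u, 0; 0, w] = 1 := by rw [hM, ← hV]; exact Units.inv_mul V
  rw [Matrix.eta_fin_two M, Matrix.mul_fin_two, Matrix.one_fin_two] at h1 h2
  have e1 := congrFun (congrFun h1 0) 0
  have e2 := congrFun (congrFun h2 0) 0
  have e3 := congrFun (congrFun h1 1) 1
  have e4 := congrFun (congrFun h2 1) 1
  simp only [Matrix.of_apply, Matrix.cons_val', Matrix.cons_val_zero, Matrix.cons_val_one,
    Matrix.head_cons, Matrix.empty_val', Matrix.cons_val_fin_one] at e1 e2 e3 e4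
  constructor
  · exact ⟨⟨u, M 0 0, by simpa using e1, by simpa using e2⟩, rfl⟩
  · exact ⟨⟨w, M 1 1, by simpa using e3, by simpa using e4⟩, rfl⟩

/-- Schur-complement criterion for invertibility of a 2x2 matrix. -/
lemma isUnit_schur (M : Matrix (Fin 2) (Fin 2) B) (u : Bˣ) (h00 : M 0 0 = (u : B))
    (hs : IsUnit (M 1 1 - M 1 0 * ((u⁻¹ : Bˣ) : B) * M 0 1)) : IsUnit M := by
  have hfact : M = (lowUnit (M 1 0 * ((u⁻¹ : Bˣ) : B))).val *
      !![(u : B), 0; 0, M 1 1 - M 1 0 * ((u⁻¹ : Bˣ) : B) * M 0 1] *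
      (upUnit (((u⁻¹ : Bˣ) : B) * M 0 1)).val := by
    rw [lowUnit_coe, upUnit_coe, Matrix.mul_fin_two, Matrix.mul_fin_two]
    nth_rewrite 1 [Matrix.eta_fin_two M]
    ext i j
    fin_cases i <;> fin_cases j <;>
      simp [h00, mul_assoc]
  rw [hfact]
  exact ((lowUnit _).isUnit.mul (isUnit_diag u.isUnit hs)).mul (upUnit _).isUnit

/-- A nonzero idempotent 2x2 matrix has some unit entry (over a local ring),
    stated in contrapositive-free form used later. -/
lemma idem_eq_zero_of_nonunit_entries {R : Type*} [Ring R] [IsLocalRing R]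
    (E : Matrix (Fin 2) (Fin 2) R) (hE : E * E = E)
    (h00 : ¬ IsUnit (E 0 0)) (h01 : ¬ IsUnit (E 0 1))
    (h10 : ¬ IsUnit (E 1 0)) (h11 : ¬ IsUnit (E 1 1)) : E = 0 := by
  rcases IsLocalRingAux.isUnit_one_sub h00 with ⟨U, hU⟩
  have e00 : (1 - E) 0 0 = (U : R) := by
    simp [Matrix.sub_apply, Matrix.one_apply, hU]
  have e01 : (1 - E) 0 1 = - E 0 1 := by
    simp [Matrix.sub_apply, Matrix.one_apply]
  have e10 : (1 - E) 1 0 = - E 1 0 := by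
    simp [Matrix.sub_apply, Matrix.one_apply]
  have e11 : (1 - E) 1 1 = 1 - E 1 1 := by
    simp [Matrix.sub_apply, Matrix.one_apply]
  have hs : IsUnit ((1 - E) 1 1 - (1 - E) 1 0 * ((U⁻¹ : Rˣ) : R) * (1 - E) 0 1) := by
    rw [e01, e10, e11]
    have heq : 1 - E 1 1 - (- E 1 0) * ((U⁻¹ : Rˣ) : R) * (- E 0 1)
        = 1 - (E 1 1 + E 1 0 * ((U⁻¹ : Rˣ) : R) * E 0 1) := by noncomm_ring
    rw [heq]
    refine IsLocalRingAux.isUnit_one_sub ?_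
    refine IsLocalRingAux.not_isUnit_add h11 ?_
    exact IsLocalRingAux.not_isUnit_mul_right
      (IsLocalRingAux.not_isUnit_mul_right h10 _) _
  have h1mE : IsUnit (1 - E) := isUnit_schur (1 - E) U e00 hs
  rcases h1mE with ⟨V, hV⟩
  have hzero : E * (1 - E) = 0 := by
    rw [mul_sub, mul_one, hE, sub_self]
  calc E = E * ((1 - E) * (V⁻¹).val) := by rw [← hV, Units.mul_inv, mul_one]
    _ = (E * (1 - E)) * (V⁻¹).val := by rw [mul_assoc]
    _ = 0 := by rw [hzero, zero_mul]

/-- Step 1: an idempotent with some unit entry is conjugate to one with unit (0,0) entry. -/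
lemma exists_conj_unit00 {R : Type*} [Ring R] [IsLocalRing R]
    (E : Matrix (Fin 2) (Fin 2) R)
    (h : IsUnit (E 0 0) ∨ IsUnit (E 0 1) ∨ IsUnit (E 1 0) ∨ IsUnit (E 1 1)) :
    ∃ Q : (Matrix (Fin 2) (Fin 2) R)ˣ, IsUnit ((Q.val * E * (Q⁻¹).val) 0 0) := by
  rcases h with h | h | h | h
  · exact ⟨1, by simpa using h⟩
  · -- E 0 1 is a unit; conjugate by a lower unipotent
    rcases h with ⟨u, hu⟩
    refine ⟨lowUnit (((u⁻¹ : Rˣ) : R) * (E 0 0 - 1)), ?_⟩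
    have : ((lowUnit (((u⁻¹ : Rˣ) : R) * (E 0 0 - 1))).val * E *
        ((lowUnit (((u⁻¹ : Rˣ) : R) * (E 0 0 - 1)))⁻¹).val) 0 0 = 1 := by
      rw [lowUnit_coe, lowUnit_inv_coe]
      nth_rewrite 2 [Matrix.eta_fin_two E]
      rw [Matrix.mul_fin_two, Matrix.mul_fin_two]
      simp only [Matrix.of_apply, Matrix.cons_val', Matrix.cons_val_zero, Matrix.empty_val',
        Matrix.cons_val_fin_one, Matrix.cons_val_one, Matrix.head_cons]
      rw [← hu]
      calc (1 * E 0 0 + 0 * E 1 0) * 1 +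
          (1 * (u : R) + 0 * E 1 1) * -(((u⁻¹ : Rˣ) : R) * (E 0 0 - 1))
          = E 0 0 - ((u : R) * ((u⁻¹ : Rˣ) : R)) * (E 0 0 - 1) := by noncomm_ring
        _ = 1 := by rw [Units.mul_inv]; noncomm_ring
    rw [this]; exact isUnit_one
  · -- E 1 0 is a unit; conjugate by an upper unipotent
    rcases h with ⟨u, hu⟩
    refine ⟨upUnit ((1 - E 0 0) * ((u⁻¹ : Rˣ) : R)), ?_⟩
    have : ((upUnit ((1 - E 0 0) * ((u⁻¹ : Rˣ) : R))).val * E *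
        ((upUnit ((1 - E 0 0) * ((u⁻¹ : Rˣ) : R)))⁻¹).val) 0 0 = 1 := by
      rw [upUnit_coe, upUnit_inv_coe]
      nth_rewrite 2 [Matrix.eta_fin_two E]
      rw [Matrix.mul_fin_two, Matrix.mul_fin_two]
      simp only [Matrix.of_apply, Matrix.cons_val', Matrix.cons_val_zero, Matrix.empty_val',
        Matrix.cons_val_fin_one, Matrix.cons_val_one, Matrix.head_cons]
      rw [← hu]
      calc (1 * E 0 0 + (1 - E 0 0) * ((u⁻¹ : Rˣ) : R) * (u : R)) * 1 +
          (1 * E 0 1 + (1 - E 0 0) * ((u⁻¹ : Rˣ) : R) * E 1 1) * 0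
          = E 0 0 + (1 - E 0 0) * (((u⁻¹ : Rˣ) : R) * (u : R)) := by noncomm_ring
        _ = 1 := by rw [Units.inv_mul]; noncomm_ring
    rw [this]; exact isUnit_one
  · -- E 1 1 is a unit; conjugate by the swap
    refine ⟨swapUnit, ?_⟩
    have hsw : ((swapUnit : (Matrix (Fin 2) (Fin 2) R)ˣ).val * E *
        ((swapUnit : (Matrix (Fin 2) (Fin 2) R)ˣ)⁻¹).val) 0 0 = E 1 1 := by
      rw [swapUnit_coe, swapUnit_inv_coe]
      nth_rewrite 1 [Matrix.eta_fin_two E]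
      rw [Matrix.mul_fin_two, Matrix.mul_fin_two]
      simp
    rw [hsw]; exact h

/-- A nontrivial idempotent 2x2 matrix over a local ring is conjugate to `diag(1,0)`. -/
lemma idem_conj_diag {R : Type*} [Ring R] [IsLocalRing R]
    (E : Matrix (Fin 2) (Fin 2) R) (hE : E * E = E) (h0 : E ≠ 0) (h1 : E ≠ 1) :
    ∃ P : (Matrix (Fin 2) (Fin 2) R)ˣ,
      E = P.val * !![(1 : R), 0; 0, 0] * (P⁻¹).val := by
  have hunit : IsUnit (E 0 0) ∨ IsUnit (E 0 1) ∨ IsUnit (E 1 0) ∨ IsUnit (E 1 1) := by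
    by_contra hc
    push_neg at hc
    exact h0 (idem_eq_zero_of_nonunit_entries E hE hc.1 hc.2.1 hc.2.2.1 hc.2.2.2)
  rcases exists_conj_unit00 E hunit with ⟨Q, hQ⟩
  set F : Matrix (Fin 2) (Fin 2) R := Q.val * E * (Q⁻¹).val with hF
  have hFF : F * F = F := by
    rw [hF]
    calc Q.val * E * (Q⁻¹).val * (Q.val * E * (Q⁻¹).val)
        = Q.val * (E * ((Q⁻¹).val * Q.val) * E) * (Q⁻¹).val := by noncomm_ring
      _ = Q.val * (E * 1 * E) * (Q⁻¹).val := by rw [Units.inv_mul]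
      _ = Q.val * (E * E) * (Q⁻¹).val := by rw [mul_one]
      _ = Q.val * E * (Q⁻¹).val := by rw [hE]
      _ = F := rfl
  have hF1 : F ≠ 1 := by
    intro hcon
    apply h1
    have : E = (Q⁻¹).val * F * Q.val := by
      rw [hF]
      calc E = ((Q⁻¹).val * Q.val) * E * ((Q⁻¹).val * Q.val) := by
            rw [Units.inv_mul]; noncomm_ring
        _ = (Q⁻¹).val * (Q.val * E * (Q⁻¹).val) * Q.val := by noncomm_ring
    rw [this, hcon, mul_one, Units.inv_mul]
  rcases hQ with ⟨v, hv⟩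
  -- idempotency relations for F
  have rels := hFF
  rw [Matrix.eta_fin_two F, Matrix.mul_fin_two] at rels
  have r1 : F 0 0 * F 0 0 + F 0 1 * F 1 0 = F 0 0 := by
    have := congrFun (congrFun rels 0) 0; simpa using this
  have r2 : F 0 0 * F 0 1 + F 0 1 * F 1 1 = F 0 1 := by
    have := congrFun (congrFun rels 0) 1; simpa using this
  have r3 : F 1 0 * F 0 0 + F 1 1 * F 1 0 = F 1 0 := by
    have := congrFun (congrFun rels 1) 0; simpa using this
  have r4 : F 1 0 * F 0 1 + F 1 1 * F 1 1 = F 1 1 := by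
    have := congrFun (congrFun rels 1) 1; simpa using this
  -- Schur complement of F is not a unit
  have hg : ¬ IsUnit (F 1 1 - F 1 0 * ((v⁻¹ : Rˣ) : R) * F 0 1) := by
    intro hcon
    exact hF1 (unitIdemEqOne hFF (isUnit_schur F v hv.symm hcon))
  -- the similarity matrix
  set P0 : Matrix (Fin 2) (Fin 2) R := !![F 0 0, - F 0 1; F 1 0, 1 - F 1 1] with hP0
  have hP0unit : IsUnit P0 := by
    refine isUnit_schur P0 v (by simp [hP0, ← hv]) ?_
    have : P0 1 1 - P0 1 0 * ((v⁻¹ : Rˣ) : R) * P0 0 1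
        = 1 - (F 1 1 - F 1 0 * ((v⁻¹ : Rˣ) : R) * F 0 1) := by
      simp [hP0]; noncomm_ring
    rw [this]
    exact IsLocalRingAux.isUnit_one_sub hg
  have hFP : F * P0 = P0 * !![(1 : R), 0; 0, 0] := by
    nth_rewrite 1 [Matrix.eta_fin_two F]
    rw [hP0, Matrix.mul_fin_two, Matrix.mul_fin_two]
    have s00 : F 0 0 * F 0 0 + F 0 1 * F 1 0 = F 0 0 * 1 + (- F 0 1) * 0 := by
      rw [r1]; noncomm_ring
    have s01 : F 0 0 * (- F 0 1) + F 0 1 * (1 - F 1 1) = F 0 0 * 0 + (- F 0 1) * 0 := by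
      calc F 0 0 * (- F 0 1) + F 0 1 * (1 - F 1 1)
          = -(F 0 0 * F 0 1 + F 0 1 * F 1 1) + F 0 1 := by noncomm_ring
        _ = - F 0 1 + F 0 1 := by rw [r2]
        _ = F 0 0 * 0 + (- F 0 1) * 0 := by noncomm_ring
    have s10 : F 1 0 * F 0 0 + F 1 1 * F 1 0 = F 1 0 * 1 + (1 - F 1 1) * 0 := by
      rw [r3]; noncomm_ring
    have s11 : F 1 0 * (- F 0 1) + F 1 1 * (1 - F 1 1) = F 1 0 * 0 + (1 - F 1 1) * 0 := by
      calc F 1 0 * (- F 0 1) + F 1 1 * (1 - F 1 1)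
          = -(F 1 0 * F 0 1 + F 1 1 * F 1 1) + F 1 1 := by noncomm_ring
        _ = - F 1 1 + F 1 1 := by rw [r4]
        _ = F 1 0 * 0 + (1 - F 1 1) * 0 := by noncomm_ring
    rw [s00, s01, s10, s11]
  rcases hP0unit with ⟨P, hP⟩
  refine ⟨Q⁻¹ * P, ?_⟩
  have hFdiag : F = P.val * !![(1 : R), 0; 0, 0] * (P⁻¹).val := by
    calc F = (F * P.val) * (P⁻¹).val := by rw [mul_assoc, Units.mul_inv, mul_one]
      _ = (P.val * !![(1 : R), 0; 0, 0]) * (P⁻¹).val := by rw [hP, hFP]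
      _ = P.val * !![(1 : R), 0; 0, 0] * (P⁻¹).val := rfl
  have hE' : E = (Q⁻¹).val * F * Q.val := by
    rw [hF]
    calc E = ((Q⁻¹).val * Q.val) * E * ((Q⁻¹).val * Q.val) := by
          rw [Units.inv_mul]; noncomm_ring
      _ = (Q⁻¹).val * (Q.val * E * (Q⁻¹).val) * Q.val := by noncomm_ring
  rw [hE', hFdiag]
  have hval : (Q⁻¹ * P).val = (Q⁻¹).val * P.val := rfl
  have hinv : ((Q⁻¹ * P)⁻¹).val = (P⁻¹).val * Q.val := by
    rw [_root_.mul_inv_rev, inv_inv]; rfl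
  rw [hval, hinv]
  noncomm_ring

/-- Matrices commuting with diag(1,0) are diagonal. -/
lemma commute_diag10 {B₀ : Type*} [Ring B₀] (M : Matrix (Fin 2) (Fin 2) B₀)
    (h : M * !![(1 : B₀), 0; 0, 0] = !![(1 : B₀), 0; 0, 0] * M) :
    M 0 1 = 0 ∧ M 1 0 = 0 := by
  rw [Matrix.eta_fin_two M, Matrix.mul_fin_two, Matrix.mul_fin_two] at h
  have h01 := congrFun (congrFun h 0) 1
  have h10 := congrFun (congrFun h 1) 0
  simp at h01 h10
  exact ⟨h01.symm, h10⟩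

/-- conjugation preserves strong cleanness -/
lemma isStronglyClean_conj {B₀ : Type*} [Ring B₀] {m : B₀}
    (h : ∃ e u : B₀, IsIdempotentElem e ∧ IsUnit u ∧ m = e + u ∧ e * u = u * e)
    (g : B₀ˣ) :
    ∃ e u : B₀, IsIdempotentElem e ∧ IsUnit u ∧
      g.val * m * (g⁻¹).val = e + u ∧ e * u = u * e := by
  rcases h with ⟨e, u, he, hu, hm, hc⟩
  refine ⟨g.val * e * (g⁻¹).val, g.val * u * (g⁻¹).val, ?_, ?_, ?_, ?_⟩
  · show (g.val * e * (g⁻¹).val) * (g.val * e * (g⁻¹).val) = g.val * e * (g⁻¹).val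
    calc (g.val * e * (g⁻¹).val) * (g.val * e * (g⁻¹).val)
        = g.val * (e * ((g⁻¹).val * g.val) * e) * (g⁻¹).val := by noncomm_ring
      _ = g.val * (e * e) * (g⁻¹).val := by rw [Units.inv_mul]; noncomm_ring
      _ = g.val * e * (g⁻¹).val := by rw [he]
  · exact (g.isUnit.mul hu).mul (g⁻¹).isUnit
  · rw [hm]; noncomm_ring
  · calc (g.val * e * (g⁻¹).val) * (g.val * u * (g⁻¹).val)
        = g.val * (e * ((g⁻¹).val * g.val) * u) * (g⁻¹).val := by noncomm_ring
      _ = g.val * (e * u) * (g⁻¹).val := by rw [Units.inv_mul]; noncomm_ring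
      _ = g.val * (u * e) * (g⁻¹).val := by rw [hc]
      _ = g.val * (u * ((g⁻¹).val * g.val) * e) * (g⁻¹).val := by
          rw [Units.inv_mul]; noncomm_ring
      _ = (g.val * u * (g⁻¹).val) * (g.val * e * (g⁻¹).val) := by noncomm_ring

end M2Aux


namespace SkewAux

/-- Auxiliary recursively-defined sequence of approximations. -/
private noncomputable def recAux {R : Type*} [Zero R] (x : ℕ → (ℕ → R) → R) : ℕ → (ℕ → R)
  | 0 => fun _ => 0
  | (n+1) => Function.update (recAux x n) n (x n (recAux x n))

/-- Coefficientwise recursive solving. -/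
lemma rec_solve {R : Type*} [Zero R] (Φ : ℕ → (ℕ → R) → R)
    (h1 : ∀ n (w w' : ℕ → R), (∀ k, k ≤ n → w k = w' k) → Φ n w = Φ n w')
    (h2 : ∀ n (w : ℕ → R), ∃ x, Φ n (Function.update w n x) = 0) :
    ∃ w : ℕ → R, ∀ n, Φ n w = 0 := by
  classical
  set x : ℕ → (ℕ → R) → R := fun n W => Classical.choose (h2 n W) with hxdef
  have hxs : ∀ n W, Φ n (Function.update W n (x n W)) = 0 :=
    fun n W => Classical.choose_spec (h2 n W)
  refine ⟨fun n => recAux x (n+1) n, fun n => ?_⟩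
  have hagree : ∀ m k, k < m → recAux x m k = recAux x (k+1) k := by
    intro m
    induction m with
    | zero => exact fun k hk => absurd hk (Nat.not_lt_zero k)
    | succ m ih =>
      intro k hk
      rcases Nat.lt_succ_iff_lt_or_eq.mp hk with h | h
      · have hne : k ≠ m := Nat.ne_of_lt h
        have : recAux x (m+1) k = recAux x m k := by
          show Function.update (recAux x m) m (x m (recAux x m)) k = recAux x m k
          rw [Function.update_of_ne hne]
        rw [this, ih k h]
      · subst h; rfl
  have heq := h1 n (fun k => recAux x (k+1) k) (recAux x (n+1))
    (fun k hk => (hagree (n+1) k (Nat.lt_succ_of_le hk)).symm)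
  rw [heq]
  exact hxs n (recAux x n)

section C

variable {R : Type*} [Ring R] (σ : R →+* R)
variable {S : Type*} [Ring S] (c : S ≃+ (ℕ → R))
variable (hmul : ∀ a b : S, ∀ n : ℕ,
  c (a * b) n = ∑ p ∈ Finset.HasAntidiagonal.antidiagonal n, c a p.1 * (σ ^ p.1) (c b p.2))

include hmul

lemma coef_mul_congr_right {a b b' : S} (n : ℕ) (h : ∀ k, k ≤ n → c b k = c b' k) :
    c (a * b) n = c (a * b') n := by
  rw [hmul, hmul]
  refine Finset.sum_congr rfl fun p hp => ?_
  have hp2 : p.2 ≤ n := by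
    have := Finset.HasAntidiagonal.mem_antidiagonal.mp hp
    omega
  rw [h p.2 hp2]

lemma coef_mul_congr_left {a a' b : S} (n : ℕ) (h : ∀ k, k ≤ n → c a k = c a' k) :
    c (a * b) n = c (a' * b) n := by
  rw [hmul, hmul]
  refine Finset.sum_congr rfl fun p hp => ?_
  have hp1 : p.1 ≤ n := by
    have := Finset.HasAntidiagonal.mem_antidiagonal.mp hp
    omega
  rw [h p.1 hp1]

lemma coef_zero_mul (s t : S) : c (s * t) 0 = c s 0 * c t 0 := by
  rw [hmul, Finset.Nat.antidiagonal_zero, Finset.sum_singleton]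
  simp

lemma coef_single_right (s : S) (x : R) (n : ℕ) :
    c (s * c.symm (fun k => if k = n then x else 0)) n = c s 0 * x := by
  rw [hmul]
  rw [Finset.sum_eq_single (0, n)]
  · simp
  · intro p hp hne
    have hps := Finset.HasAntidiagonal.mem_antidiagonal.mp hp
    have hp2 : p.2 ≠ n := by
      intro hc
      apply hne
      have : p.1 = 0 := by omega
      exact Prod.ext this hc
    simp [hp2]
  · intro hnot
    exact absurd (Finset.HasAntidiagonal.mem_antidiagonal.mpr (by simp)) hnot

lemma coef_single_left (s : S) (x : R) (n : ℕ) :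
    c (c.symm (fun k => if k = n then x else 0) * s) n = x * (σ ^ n) (c s 0) := by
  rw [hmul]
  rw [Finset.sum_eq_single (n, 0)]
  · simp
  · intro p hp hne
    have hps := Finset.HasAntidiagonal.mem_antidiagonal.mp hp
    have hp1 : p.1 ≠ n := by
      intro hc
      apply hne
      have : p.2 = 0 := by omega
      exact Prod.ext hc this
    simp [hp1]
  · intro hnot
    exact absurd (Finset.HasAntidiagonal.mem_antidiagonal.mpr (by simp)) hnot

omit hmul in
lemma update_split (w : ℕ → R) (n : ℕ) (x : R) :
    c.symm (Function.update w n x) =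
      c.symm (Function.update w n 0) + c.symm (fun k => if k = n then x else 0) := by
  rw [← map_add]
  congr 1
  funext k
  by_cases h : k = n
  · subst h; simp [Function.update_self]
  · simp [Function.update_of_ne h, h]


lemma isUnit_of_const_isUnit (hone : c 1 = fun n => if n = 0 then 1 else 0)
    (a : S) (h : IsUnit (c a 0)) : IsUnit a := by
  classical
  rcases h with ⟨u, hu⟩
  -- right inverse
  obtain ⟨g, hg⟩ : ∃ g : S, a * g = 1 := by
    have h1 : ∀ n (w w' : ℕ → R), (∀ k, k ≤ n → w k = w' k) →
        c (a * c.symm w) n - c 1 n = c (a * c.symm w') n - c 1 n := by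
      intro n w w' h
      have := coef_mul_congr_right σ c hmul (a := a) (b := c.symm w) (b' := c.symm w') n
        (fun k hk => by rw [c.apply_symm_apply, c.apply_symm_apply]; exact h k hk)
      rw [this]
    have h2 : ∀ n (w : ℕ → R), ∃ x,
        c (a * c.symm (Function.update w n x)) n - c 1 n = 0 := by
      intro n w
      set t := c 1 n - c (a * c.symm (Function.update w n 0)) n with ht
      refine ⟨(↑u⁻¹ : R) * t, ?_⟩
      rw [update_split c, mul_add, map_add]
      have hsingle := coef_single_right σ c hmul a ((↑u⁻¹ : R) * t) n
      rw [Pi.add_apply, hsingle, ← hu, ← mul_assoc, Units.mul_inv, one_mul, ht]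
      abel
    obtain ⟨w, hw⟩ := rec_solve (fun n w => c (a * c.symm w) n - c 1 n) h1 h2
    refine ⟨c.symm w, ?_⟩
    apply c.injective
    funext n
    exact sub_eq_zero.mp (hw n)
  -- left inverse
  obtain ⟨l, hl⟩ : ∃ l : S, l * a = 1 := by
    have h1 : ∀ n (w w' : ℕ → R), (∀ k, k ≤ n → w k = w' k) →
        c (c.symm w * a) n - c 1 n = c (c.symm w' * a) n - c 1 n := by
      intro n w w' h
      have := coef_mul_congr_left σ c hmul (a := c.symm w) (a' := c.symm w') (b := a) n
        (fun k hk => by rw [c.apply_symm_apply, c.apply_symm_apply]; exact h k hk)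
      rw [this]
    have h2 : ∀ n (w : ℕ → R), ∃ x,
        c (c.symm (Function.update w n x) * a) n - c 1 n = 0 := by
      intro n w
      have hun : IsUnit ((σ ^ n) (c a 0)) := by
        rw [← hu]; exact u.isUnit.map (σ ^ n)
      rcases hun with ⟨v, hv⟩
      set t := c 1 n - c (c.symm (Function.update w n 0) * a) n with ht
      refine ⟨t * (↑v⁻¹ : R), ?_⟩
      rw [update_split c, add_mul, map_add]
      have hsingle := coef_single_left σ c hmul a (t * (↑v⁻¹ : R)) n
      rw [Pi.add_apply, hsingle, ← hv, mul_assoc, Units.inv_mul, mul_one, ht]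
      abel
    obtain ⟨w, hw⟩ := rec_solve (fun n w => c (c.symm w * a) n - c 1 n) h1 h2
    refine ⟨c.symm w, ?_⟩
    apply c.injective
    funext n
    exact sub_eq_zero.mp (hw n)
  have hlg : l = g := by
    calc l = l * (a * g) := by rw [hg, mul_one]
      _ = (l * a) * g := by rw [mul_assoc]
      _ = g := by rw [hl, one_mul]
  exact ⟨⟨a, g, hg, by rw [← hlg]; exact hl⟩, rfl⟩

lemma solve_riccati (a b d e : S) (hb : c b 0 = 0)
    (hs : ∀ n : ℕ, Function.Surjective (fun x : R => c e 0 * x - x * (σ ^ n) (c a 0))) :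
    ∃ z : S, e * z + z * b * z - z * a = d := by
  classical
  have h1 : ∀ n (w w' : ℕ → R), (∀ k, k ≤ n → w k = w' k) →
      c (e * c.symm w + c.symm w * b * c.symm w - c.symm w * a - d) n =
      c (e * c.symm w' + c.symm w' * b * c.symm w' - c.symm w' * a - d) n := by
    intro n w w' h
    have hc : ∀ k, k ≤ n → c (c.symm w) k = c (c.symm w') k := by
      intro k hk
      rw [c.apply_symm_apply, c.apply_symm_apply]
      exact h k hk
    have e1 : c (e * c.symm w) n = c (e * c.symm w') n :=
      coef_mul_congr_right σ c hmul n hc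
    have e2 : c (c.symm w * a) n = c (c.symm w' * a) n :=
      coef_mul_congr_left σ c hmul n hc
    have e3 : c (c.symm w * b * c.symm w) n = c (c.symm w' * b * c.symm w') n := by
      have st1 : c (c.symm w * b * c.symm w) n = c (c.symm w * b * c.symm w') n :=
        coef_mul_congr_right σ c hmul n hc
      have st2 : c (c.symm w * b * c.symm w') n = c (c.symm w' * b * c.symm w') n :=
        coef_mul_congr_left σ c hmul n
          (fun k hk => coef_mul_congr_left σ c hmul k (fun l hl => hc l (le_trans hl hk)))
      rw [st1, st2]
    rw [map_sub, map_sub, map_add, map_sub, map_sub, map_add,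
      Pi.sub_apply, Pi.sub_apply, Pi.add_apply, Pi.sub_apply, Pi.sub_apply, Pi.add_apply,
      e1, e2, e3]
  have h2 : ∀ n (w : ℕ → R), ∃ x,
      c (e * c.symm (Function.update w n x) +
        c.symm (Function.update w n x) * b * c.symm (Function.update w n x) -
        c.symm (Function.update w n x) * a - d) n = 0 := by
    intro n w
    set W0 : S := c.symm (Function.update w n 0) with hW0
    set base : R := c (e * W0 + W0 * b * W0 - W0 * a - d) n with hbase
    obtain ⟨x, hx⟩ := hs n (-base)
    refine ⟨x, ?_⟩
    set X : S := c.symm (fun k => if k = n then x else 0) with hX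
    have hsplit : c.symm (Function.update w n x) = W0 + X := update_split c w n x
    have hring : e * (W0 + X) + (W0 + X) * b * (W0 + X) - (W0 + X) * a - d =
        (e * W0 + W0 * b * W0 - W0 * a - d) +
        (e * X + (X * b * W0 + W0 * b * X + X * b * X) - X * a) := by noncomm_ring
    rw [hsplit, hring, map_add, Pi.add_apply, ← hbase]
    have t1 : c (e * X) n = c e 0 * x := coef_single_right σ c hmul e x n
    have t2 : c (X * a) n = x * (σ ^ n) (c a 0) := coef_single_left σ c hmul a x n
    have t3 : c (X * b * W0) n = 0 := by
      rw [mul_assoc]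
      rw [coef_single_left σ c hmul (b * W0) x n, coef_zero_mul σ c hmul, hb, zero_mul,
        map_zero, mul_zero]
    have t4 : c (W0 * b * X) n = 0 := by
      rw [coef_single_right σ c hmul (W0 * b) x n, coef_zero_mul σ c hmul, hb, mul_zero,
        zero_mul]
    have t5 : c (X * b * X) n = 0 := by
      rw [coef_single_right σ c hmul (X * b) x n, coef_zero_mul σ c hmul, hb, mul_zero,
        zero_mul]
    rw [map_sub, map_add, Pi.sub_apply, Pi.add_apply, map_add, map_add,
      Pi.add_apply, Pi.add_apply, t1, t2, t3, t4, t5]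
    have : base + (c e 0 * x + (0 + 0 + 0) - x * (σ ^ n) (c a 0)) =
        base + (c e 0 * x - x * (σ ^ n) (c a 0)) := by abel
    rw [this]
    have hx' : c e 0 * x - x * (σ ^ n) (c a 0) = -base := hx
    rw [hx', add_neg_cancel]
  obtain ⟨w, hw⟩ := rec_solve
    (fun n w => c (e * c.symm w + c.symm w * b * c.symm w - c.symm w * a - d) n) h1 h2
  refine ⟨c.symm w, ?_⟩
  have : e * c.symm w + c.symm w * b * c.symm w - c.symm w * a - d = 0 := by
    apply c.injective
    funext n
    rw [map_zero]
    exact hw n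
  have h' := sub_eq_zero.mp this
  exact h'

lemma solve_sylvester (a e b : S)
    (hs : ∀ n : ℕ, Function.Surjective (fun x : R => x * (σ ^ n) (c e 0) - c a 0 * x)) :
    ∃ y : S, y * e - a * y + b = 0 := by
  classical
  have h1 : ∀ n (w w' : ℕ → R), (∀ k, k ≤ n → w k = w' k) →
      c (c.symm w * e - a * c.symm w + b) n = c (c.symm w' * e - a * c.symm w' + b) n := by
    intro n w w' h
    have hc : ∀ k, k ≤ n → c (c.symm w) k = c (c.symm w') k := by
      intro k hk
      rw [c.apply_symm_apply, c.apply_symm_apply]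
      exact h k hk
    have e1 : c (c.symm w * e) n = c (c.symm w' * e) n :=
      coef_mul_congr_left σ c hmul n hc
    have e2 : c (a * c.symm w) n = c (a * c.symm w') n :=
      coef_mul_congr_right σ c hmul n hc
    rw [map_add, map_sub, map_add, map_sub,
      Pi.add_apply, Pi.sub_apply, Pi.add_apply, Pi.sub_apply, e1, e2]
  have h2 : ∀ n (w : ℕ → R), ∃ x,
      c (c.symm (Function.update w n x) * e - a * c.symm (Function.update w n x) + b) n
        = 0 := by
    intro n w
    set W0 : S := c.symm (Function.update w n 0) with hW0
    set base : R := c (W0 * e - a * W0 + b) n with hbase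
    obtain ⟨x, hx⟩ := hs n (-base)
    refine ⟨x, ?_⟩
    set X : S := c.symm (fun k => if k = n then x else 0) with hX
    have hsplit : c.symm (Function.update w n x) = W0 + X := update_split c w n x
    have hring : (W0 + X) * e - a * (W0 + X) + b =
        (W0 * e - a * W0 + b) + (X * e - a * X) := by noncomm_ring
    rw [hsplit, hring, map_add, Pi.add_apply, ← hbase]
    have t1 : c (X * e) n = x * (σ ^ n) (c e 0) := coef_single_left σ c hmul e x n
    have t2 : c (a * X) n = c a 0 * x := coef_single_right σ c hmul a x n
    rw [map_sub, Pi.sub_apply, t1, t2]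
    have hx' : x * (σ ^ n) (c e 0) - c a 0 * x = -base := hx
    rw [hx', add_neg_cancel]
  obtain ⟨w, hw⟩ := rec_solve
    (fun n w => c (c.symm w * e - a * c.symm w + b) n) h1 h2
  refine ⟨c.symm w, ?_⟩
  apply c.injective
  funext n
  rw [map_zero]
  exact hw n

def piHom (hone : c 1 = fun n => if n = 0 then 1 else 0) : S →+* R where
  toFun a := c a 0
  map_one' := by show c 1 0 = 1; rw [hone]; simp
  map_mul' a b := coef_zero_mul σ c hmul a b
  map_zero' := by show c 0 0 = 0; rw [map_zero]; rfl
  map_add' a b := by show c (a + b) 0 = c a 0 + c b 0; rw [map_add]; rfl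

lemma piHom_apply (hone : c 1 = fun n => if n = 0 then 1 else 0) (a : S) :
    piHom σ c hmul hone a = c a 0 := rfl

def iotaHom (hone : c 1 = fun n => if n = 0 then 1 else 0) : R →+* S where
  toFun r := c.symm (fun k => if k = 0 then r else 0)
  map_one' := by
    apply c.injective
    rw [c.apply_symm_apply, hone]
  map_mul' r s := by
    apply c.injective
    rw [c.apply_symm_apply]
    funext n
    rw [hmul]
    rcases Nat.eq_zero_or_pos n with hn | hn
    · subst hn
      rw [Finset.Nat.antidiagonal_zero, Finset.sum_singleton]
      simp
    · have hn' : n ≠ 0 := Nat.pos_iff_ne_zero.mp hn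
      rw [if_neg hn']
      refine (Finset.sum_eq_zero fun p hp => ?_).symm
      have hps := Finset.HasAntidiagonal.mem_antidiagonal.mp hp
      rcases Nat.eq_zero_or_pos p.1 with h1 | h1
      · have h2 : p.2 ≠ 0 := by omega
        rw [c.apply_symm_apply, c.apply_symm_apply]
        simp [h2]
      · have h1' : p.1 ≠ 0 := Nat.pos_iff_ne_zero.mp h1
        rw [c.apply_symm_apply]
        simp [h1']
  map_zero' := by
    show c.symm (fun k => if k = 0 then (0 : R) else 0) = 0
    have : (fun k => if k = 0 then (0 : R) else 0) = (0 : ℕ → R) := by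
      funext k; simp
    rw [this, map_zero]
  map_add' r s := by
    apply c.injective
    show c (c.symm fun k => if k = 0 then r + s else 0) =
      c (c.symm (fun k => if k = 0 then r else 0) + c.symm (fun k => if k = 0 then s else 0))
    rw [c.apply_symm_apply, map_add, c.apply_symm_apply, c.apply_symm_apply]
    funext k
    by_cases h : k = 0 <;> simp [h]

lemma pi_iota (hone : c 1 = fun n => if n = 0 then 1 else 0) (r : R) :
    c (iotaHom σ c hmul hone r) 0 = r := by
  show c (c.symm (fun k => if k = 0 then r else 0)) 0 = r
  rw [c.apply_symm_apply]
  simp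

omit hmul in
lemma pow_nonunit {R₀ : Type*} [Ring R₀] (τ : R₀ →+* R₀)
    (hτ : ∀ j : R₀, ¬ IsUnit j → ¬ IsUnit (τ j)) (n : ℕ) {j : R₀} (hj : ¬ IsUnit j) :
    ¬ IsUnit ((τ ^ n) j) := by
  induction n with
  | zero => simpa using hj
  | succ n ih =>
    have : (τ ^ (n+1)) j = τ ((τ ^ n) j) := by
      rw [pow_succ']
      rfl
    rw [this]
    exact hτ _ ih

end C
end SkewAux


/-- Let `R` be a weakly bleached local ring with `M₂(R)` strongly clean, and `σ` an
endomorphism of `R` with `σ(J(R)) ⊆ J(R)`.  Then `M₂(R[[x; σ]])` is strongly clean.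
Here the left skew power series ring `R[[x; σ]]` (with relation `x·r = σ(r)·x`) is
presented as a ring `S` whose elements correspond additively to coefficient sequences
`ℕ → R`, with `1` the sequence supported at `0` and with multiplication given by the
skew convolution `(ab)ₙ = ∑_{i+j=n} aᵢ · σ^i(bⱼ)`. -/
theorem matrix_two_stronglyClean_skewPowerSeries {R : Type*} [Ring R] [IsLocalRing R]
    (hwb : IsWeaklyBleached R)
    (hR : ∀ A : Matrix (Fin 2) (Fin 2) R, IsStronglyClean A)
    (σ : R →+* R) (hσ : ∀ j : R, ¬ IsUnit j → ¬ IsUnit (σ j))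
    (S : Type*) [Ring S] (c : S ≃+ (ℕ → R))
    (hone : c 1 = fun n => if n = 0 then 1 else 0)
    (hmul : ∀ a b : S, ∀ n : ℕ,
      c (a * b) n = ∑ p ∈ Finset.HasAntidiagonal.antidiagonal n, c a p.1 * (σ ^ p.1) (c b p.2)) :
    ∀ A : Matrix (Fin 2) (Fin 2) S, IsStronglyClean A := by
  classical
  intro α
  set π : S →+* R := SkewAux.piHom σ c hmul hone with hπdef
  set ι : R →+* S := SkewAux.iotaHom σ c hmul hone with hιdef
  have hπι : ∀ r : R, π (ι r) = r := fun r => SkewAux.pi_iota σ c hmul hone r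
  set Pi2 : Matrix (Fin 2) (Fin 2) S →+* Matrix (Fin 2) (Fin 2) R := π.mapMatrix with hPidef
  set Io : Matrix (Fin 2) (Fin 2) R →+* Matrix (Fin 2) (Fin 2) S := ι.mapMatrix with hIodef
  have hPiapp : ∀ (m : Matrix (Fin 2) (Fin 2) S) (i j : Fin 2), Pi2 m i j = c (m i j) 0 := by
    intro m i j
    rw [hPidef, RingHom.mapMatrix_apply, Matrix.map_apply]
    rfl
  have hPiIo : ∀ M : Matrix (Fin 2) (Fin 2) R, Pi2 (Io M) = M := by
    intro M
    ext i j
    rw [hPidef, hIodef, RingHom.mapMatrix_apply, RingHom.mapMatrix_apply, Matrix.map_apply,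
      Matrix.map_apply]
    exact hπι (M i j)
  -- lifting of invertibility along Pi2
  have hlift : ∀ m : Matrix (Fin 2) (Fin 2) S, IsUnit (Pi2 m) → IsUnit m := by
    intro m hm
    rcases hm with ⟨V, hV⟩
    set N : Matrix (Fin 2) (Fin 2) S := m * Io ((V⁻¹).val) with hN
    have hPiN : Pi2 N = 1 := by
      rw [hN, map_mul, hPiIo, ← hV, Units.mul_inv]
    have hNc : ∀ i j : Fin 2, c (N i j) 0 = (1 : Matrix (Fin 2) (Fin 2) R) i j := by
      intro i j
      rw [← hPiapp, hPiN]
    have h00 : IsUnit (N 0 0) := by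
      apply SkewAux.isUnit_of_const_isUnit σ c hmul hone
      rw [hNc 0 0, Matrix.one_apply_eq]
      exact isUnit_one
    rcases h00 with ⟨u, hu⟩
    have hNunit : IsUnit N := by
      apply M2Aux.isUnit_schur N u hu.symm
      apply SkewAux.isUnit_of_const_isUnit σ c hmul hone
      have h01 : c (N 0 1) 0 = 0 := by rw [hNc 0 1]; simp [Matrix.one_apply]
      have h11 : c (N 1 1) 0 = 1 := by rw [hNc 1 1]; simp [Matrix.one_apply]
      rw [map_sub, Pi.sub_apply, SkewAux.coef_zero_mul σ c hmul, h01, mul_zero, sub_zero, h11]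
      exact isUnit_one
    rcases hNunit with ⟨W, hW⟩
    have hm2 : m = N * Io (V.val) := by
      calc m = m * (Io ((V⁻¹).val) * Io (V.val)) := by
            rw [← map_mul, Units.inv_mul, map_one, mul_one]
        _ = N * Io (V.val) := by rw [hN, mul_assoc]
    rw [hm2]
    exact IsUnit.mul ⟨W, hW⟩ (V.isUnit.map Io)
  by_cases hA : IsUnit (Pi2 α)
  · exact ⟨0, α, IsIdempotentElem.zero, hlift α hA, (zero_add α).symm,
      by rw [zero_mul, mul_zero]⟩
  by_cases hA1 : IsUnit (1 - Pi2 α)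
  · have h1 : IsUnit (α - 1) := by
      have h2 : IsUnit (1 - α) := hlift (1 - α) (by rw [map_sub, map_one]; exact hA1)
      have h3 := h2.neg
      rwa [neg_sub] at h3
    exact ⟨1, α - 1, IsIdempotentElem.one, h1, by abel, by rw [one_mul, mul_one]⟩
  -- the essential case
  obtain ⟨E, U, hEidem, hUunit, hAEU, hcomm⟩ := hR (Pi2 α)
  have hE0 : E ≠ 0 := by
    intro h
    apply hA
    rw [hAEU, h, zero_add]
    exact hUunit
  have hE1 : E ≠ 1 := by
    intro h
    apply hA1
    have h2 : 1 - Pi2 α = -U := by rw [hAEU, h]; abel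
    rw [h2]
    exact hUunit.neg
  obtain ⟨P, hP⟩ := M2Aux.idem_conj_diag E hEidem hE0 hE1
  set D : Matrix (Fin 2) (Fin 2) R := !![(1 : R), 0; 0, 0] with hD
  set U' : Matrix (Fin 2) (Fin 2) R := (P⁻¹).val * U * P.val with hU'
  have hA' : (P⁻¹).val * (Pi2 α) * P.val = D + U' := by
    rw [hAEU, hP]
    calc (P⁻¹).val * (P.val * D * (P⁻¹).val + U) * P.val
        = ((P⁻¹).val * P.val) * D * ((P⁻¹).val * P.val) + (P⁻¹).val * U * P.val := by
          noncomm_ring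
      _ = D + U' := by rw [Units.inv_mul, one_mul, mul_one, hU']
  have hU'comm : U' * D = D * U' := by
    have h1 : P.val * D * (P⁻¹).val * U = U * (P.val * D * (P⁻¹).val) := by
      rw [← hP]; exact hcomm
    have lhs_eq : (P⁻¹).val * ((P.val * D * (P⁻¹).val) * U) * P.val = D * U' := by
      rw [hU']
      calc (P⁻¹).val * ((P.val * D * (P⁻¹).val) * U) * P.val
          = ((P⁻¹).val * P.val) * D * ((P⁻¹).val * U * P.val) := by noncomm_ring
        _ = D * ((P⁻¹).val * U * P.val) := by rw [Units.inv_mul, one_mul]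
    have rhs_eq : (P⁻¹).val * (U * (P.val * D * (P⁻¹).val)) * P.val = U' * D := by
      rw [hU']
      calc (P⁻¹).val * (U * (P.val * D * (P⁻¹).val)) * P.val
          = ((P⁻¹).val * U * P.val) * D * ((P⁻¹).val * P.val) := by noncomm_ring
        _ = ((P⁻¹).val * U * P.val) * D := by rw [Units.inv_mul, mul_one]
    calc U' * D = (P⁻¹).val * (U * (P.val * D * (P⁻¹).val)) * P.val := rhs_eq.symm
      _ = (P⁻¹).val * ((P.val * D * (P⁻¹).val) * U) * P.val := by rw [← h1]
      _ = D * U' := lhs_eq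
  obtain ⟨h01, h10⟩ := M2Aux.commute_diag10 U' hU'comm
  have hU'unit : IsUnit U' := by
    rw [hU']
    exact ((P⁻¹).isUnit.mul hUunit).mul P.isUnit
  have hU'eta : U' = !![U' 0 0, 0; 0, U' 1 1] := by
    conv_lhs => rw [Matrix.eta_fin_two U']
    rw [h01, h10]
  obtain ⟨huu, hww⟩ := M2Aux.isUnit_diag_entries (u := U' 0 0) (w := U' 1 1)
    (by rw [← hU'eta]; exact hU'unit)
  set p : R := 1 + U' 0 0 with hp
  set q : R := U' 1 1 with hq
  have hDsum : D + U' = !![p, 0; 0, q] := by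
    conv_lhs => rw [hU'eta]
    rw [hD]
    ext i j
    fin_cases i <;> fin_cases j <;> simp [Matrix.add_apply, hp, hq]
  have hA'' : (P⁻¹).val * (Pi2 α) * P.val = !![p, 0; 0, q] := by rw [hA', hDsum]
  have hback : Pi2 α = P.val * !![p, 0; 0, q] * (P⁻¹).val := by
    rw [← hA'']
    calc Pi2 α = (P.val * (P⁻¹).val) * Pi2 α * (P.val * (P⁻¹).val) := by
          rw [Units.mul_inv, one_mul, mul_one]
      _ = P.val * ((P⁻¹).val * Pi2 α * P.val) * (P⁻¹).val := by noncomm_ring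
  have hpnon : ¬ IsUnit p := by
    intro h
    apply hA
    rw [hback]
    exact (P.isUnit.mul (M2Aux.isUnit_diag h hww)).mul (P⁻¹).isUnit
  have hqnon : ¬ IsUnit (1 - q) := by
    intro h
    apply hA1
    have h1mp : 1 - p = -(U' 0 0) := by rw [hp]; abel
    have hdiag : IsUnit !![1 - p, 0; 0, 1 - q] := by
      rw [h1mp]
      exact M2Aux.isUnit_diag huu.neg h
    have hsub : (1 : Matrix (Fin 2) (Fin 2) R) - !![p, 0; 0, q] = !![1 - p, 0; 0, 1 - q] := by
      rw [Matrix.one_fin_two]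
      ext i j
      fin_cases i <;> fin_cases j <;> simp [Matrix.sub_apply]
    have h1A : 1 - Pi2 α = P.val * !![1 - p, 0; 0, 1 - q] * (P⁻¹).val := by
      rw [hback, ← hsub, mul_sub, mul_one, sub_mul, Units.mul_inv]
    rw [h1A]
    exact (P.isUnit.mul hdiag).mul (P⁻¹).isUnit
  -- lift the similarity to S
  set PS : (Matrix (Fin 2) (Fin 2) S)ˣ :=
    ⟨Io P.val, Io ((P⁻¹).val),
      by rw [← map_mul, Units.mul_inv, map_one],
      by rw [← map_mul, Units.inv_mul, map_one]⟩ with hPS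
  have hPSval : PS.val = Io P.val := rfl
  have hPSinv : (PS⁻¹).val = Io ((P⁻¹).val) := rfl
  set β : Matrix (Fin 2) (Fin 2) S := (PS⁻¹).val * α * PS.val with hβ
  have hPiβ : Pi2 β = !![p, 0; 0, q] := by
    rw [hβ, map_mul, map_mul, hPSval, hPSinv, hPiIo, hPiIo, hA'']
  have hcβ : ∀ i j : Fin 2, c (β i j) 0 = !![p, 0; 0, q] i j := by
    intro i j
    rw [← hPiapp, hPiβ]
  have hc00 : c (β 0 0) 0 = p := by rw [hcβ 0 0]; simp
  have hc01 : c (β 0 1) 0 = 0 := by rw [hcβ 0 1]; simp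
  have hc11 : c (β 1 1) 0 = q := by rw [hcβ 1 1]; simp
  -- solve the Riccati equation to kill the (1,0) entry
  have hsur1 : ∀ n : ℕ,
      Function.Surjective (fun x : R => c (β 1 1) 0 * x - x * (σ ^ n) (c (β 0 0) 0)) := by
    intro n
    have hq1 : ¬ IsUnit (q - 1) := by
      intro h
      apply hqnon
      have := h.neg
      rwa [neg_sub] at this
    have hσp : ¬ IsUnit ((σ ^ n) p) := SkewAux.pow_nonunit σ hσ n hpnon
    have h := (hwb (q - 1) ((σ ^ n) p) hq1 hσp).1
    have heq : (fun x : R => (1 + (q - 1)) * x - x * (σ ^ n) p) =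
        (fun x : R => c (β 1 1) 0 * x - x * (σ ^ n) (c (β 0 0) 0)) := by
      funext x
      rw [hc00, hc11]
      have h2 : 1 + (q - 1) = q := by abel
      rw [h2]
    rw [heq] at h
    exact h
  obtain ⟨z, hz⟩ := SkewAux.solve_riccati σ c hmul (β 0 0) (β 0 1) (β 1 0) (β 1 1) hc01 hsur1
  set L : (Matrix (Fin 2) (Fin 2) S)ˣ := M2Aux.lowUnit z with hL
  set γ : Matrix (Fin 2) (Fin 2) S := L.val * β * (L⁻¹).val with hγdef
  set a' : S := β 0 0 - β 0 1 * z with ha'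
  set e' : S := z * β 0 1 + β 1 1 with he'
  have hγ : γ = !![a', β 0 1; 0, e'] := by
    rw [hγdef, hL, M2Aux.lowUnit_coe, M2Aux.lowUnit_inv_coe]
    conv_lhs => rw [Matrix.eta_fin_two β]
    rw [Matrix.mul_fin_two, Matrix.mul_fin_two]
    have g00 : (1 * β 0 0 + 0 * β 1 0) * 1 + (1 * β 0 1 + 0 * β 1 1) * -z = a' := by
      rw [ha']; noncomm_ring
    have g01 : (1 * β 0 0 + 0 * β 1 0) * 0 + (1 * β 0 1 + 0 * β 1 1) * 1 = β 0 1 := by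
      noncomm_ring
    have g10 : (z * β 0 0 + 1 * β 1 0) * 1 + (z * β 0 1 + 1 * β 1 1) * -z = 0 := by
      have hg : (z * β 0 0 + 1 * β 1 0) * 1 + (z * β 0 1 + 1 * β 1 1) * -z
          = β 1 0 - (β 1 1 * z + z * β 0 1 * z - z * β 0 0) := by noncomm_ring
      rw [hg, hz, sub_self]
    have g11 : (z * β 0 0 + 1 * β 1 0) * 0 + (z * β 0 1 + 1 * β 1 1) * 1 = e' := by
      rw [he']; noncomm_ring
    rw [g00, g01, g10, g11]
  have hca' : c a' 0 = p := by
    rw [ha', map_sub, Pi.sub_apply, SkewAux.coef_zero_mul σ c hmul, hc01, zero_mul,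
      sub_zero, hc00]
  have hce' : c e' 0 = q := by
    rw [he', map_add, Pi.add_apply, SkewAux.coef_zero_mul σ c hmul, hc01, mul_zero,
      zero_add, hc11]
  -- solve the Sylvester equation to kill the (0,1) entry
  have hsur2 : ∀ n : ℕ,
      Function.Surjective (fun x : R => x * (σ ^ n) (c e' 0) - c a' 0 * x) := by
    intro n t
    have hq1 : ¬ IsUnit ((σ ^ n) q - 1) := by
      have he2 : (σ ^ n) q - 1 = (σ ^ n) (q - 1) := by rw [map_sub, map_one]
      rw [he2]
      apply SkewAux.pow_nonunit σ hσ n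
      intro h
      apply hqnon
      have := h.neg
      rwa [neg_sub] at this
    obtain ⟨x, hx⟩ := (hwb ((σ ^ n) q - 1) p hq1 hpnon).2 (-t)
    refine ⟨x, ?_⟩
    simp only at hx
    have h1q : 1 + ((σ ^ n) q - 1) = (σ ^ n) q := by abel
    rw [h1q] at hx
    show x * (σ ^ n) (c e' 0) - c a' 0 * x = t
    rw [hce', hca']
    have h2 : x * (σ ^ n) q - p * x = -(p * x - x * (σ ^ n) q) := by abel
    rw [h2, hx, neg_neg]
  obtain ⟨y, hy⟩ := SkewAux.solve_sylvester σ c hmul a' e' (β 0 1) hsur2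
  set Uy : (Matrix (Fin 2) (Fin 2) S)ˣ := M2Aux.upUnit y with hUy
  set δ : Matrix (Fin 2) (Fin 2) S := Uy.val * γ * (Uy⁻¹).val with hδdef
  have hδ : δ = !![a', 0; 0, e'] := by
    rw [hδdef, hUy, M2Aux.upUnit_coe, M2Aux.upUnit_inv_coe, hγ]
    rw [Matrix.mul_fin_two, Matrix.mul_fin_two]
    have g00 : (1 * a' + y * 0) * 1 + (1 * β 0 1 + y * e') * 0 = a' := by noncomm_ring
    have g01 : (1 * a' + y * 0) * -y + (1 * β 0 1 + y * e') * 1 = 0 := by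
      have hg : (1 * a' + y * 0) * -y + (1 * β 0 1 + y * e') * 1
          = y * e' - a' * y + β 0 1 := by noncomm_ring
      rw [hg, hy]
    have g10 : (0 * a' + 1 * 0) * 1 + (0 * β 0 1 + 1 * e') * 0 = 0 := by noncomm_ring
    have g11 : (0 * a' + 1 * 0) * -y + (0 * β 0 1 + 1 * e') * 1 = e' := by noncomm_ring
    rw [g00, g01, g10, g11]
  -- δ is strongly clean
  have ha'unit : IsUnit (a' - 1) := by
    apply SkewAux.isUnit_of_const_isUnit σ c hmul hone
    have hc1 : c (1 : S) 0 = 1 := by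
      have := congrFun hone 0
      simpa using this
    have hval : c (a' - 1) 0 = p - 1 := by
      rw [map_sub, Pi.sub_apply, hca', hc1]
    rw [hval]
    have := (IsLocalRingAux.isUnit_one_sub hpnon).neg
    rwa [neg_sub] at this
  have he'unit : IsUnit e' := by
    apply SkewAux.isUnit_of_const_isUnit σ c hmul hone
    rw [hce']
    exact hww
  have hδclean : IsStronglyClean δ := by
    refine ⟨!![(1 : S), 0; 0, 0], !![a' - 1, 0; 0, e'], ?_, ?_, ?_, ?_⟩
    · show !![(1 : S), 0; 0, 0] * !![(1 : S), 0; 0, 0] = !![(1 : S), 0; 0, 0]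
      rw [Matrix.mul_fin_two]
      simp
    · exact M2Aux.isUnit_diag ha'unit he'unit
    · rw [hδ]
      ext i j
      fin_cases i <;> fin_cases j <;> simp [Matrix.add_apply] <;> abel
    · rw [Matrix.mul_fin_two, Matrix.mul_fin_two]
      simp
  -- transport the decomposition back to α
  set G : (Matrix (Fin 2) (Fin 2) S)ˣ := PS * L⁻¹ * Uy⁻¹ with hG
  have hαG : α = G.val * δ * (G⁻¹).val := by
    have hGinv : (PS * L⁻¹ * Uy⁻¹)⁻¹ = Uy * (L * PS⁻¹) := by
      rw [_root_.mul_inv_rev, _root_.mul_inv_rev, inv_inv, inv_inv]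
    rw [hG, hδdef, hγdef, hβ, hGinv]
    simp only [Units.val_mul, mul_assoc, Units.inv_mul_cancel_left, Units.mul_inv_cancel_left]
    rw [Units.mul_inv, mul_one]
  rw [hαG]
  exact M2Aux.isStronglyClean_conj hδclean G
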